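/- arXiv:2407.15900 — 3 statements merged into one kernel-verified Lean document; each statement's English description precedes it below -/
import Mathlib

section
/- Let −∞ < a < b < ∞ and let F_a^b denote the standard normal distribution truncated to [a, b], i.e. F_a^b(x) = 0 for x < a, F_a^b(x) = (Φ(x) − Φ(a))/(Φ(b) − Φ(a)) for a ≤ x ≤ b, and F_a^b(x) = 1 for x > b. Then for every threshold τ with a ≤ τ ≤ b and every observation y with a ≤ y ≤ b, writing v = max(y, τ): twCRPS_τ(F_a^b, y) = −τ ((Φ(τ) − Φ(a))/(Φ(b) − Φ(a)))² + v (2 (Φ(v) − Φ(a))/(Φ(b) − Φ(a)) − 1) + (2/(Φ(b) − Φ(a))) (φ(v) − φ(τ) (Φ(τ) − Φ(a))/(Φ(b) − Φ(a))) − (1/√π) (Φ(√2·b) − Φ(√2·τ))/(Φ(b) − Φ(a))². -/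
open MeasureTheory Set

/-- Threshold-weighted CRPS: `twCRPS_τ(F, y) = ∫_τ^∞ (F(z) − 𝟙{z ≥ y})² dz`. -/
noncomputable def twCRPS (F : ℝ → ℝ) (τ y : ℝ) : ℝ :=
  ∫ z in Set.Ioi τ, (F z - if y ≤ z then (1 : ℝ) else 0) ^ 2

/-- Standard normal density `φ(x) = (1/√(2π)) e^{−x²/2}`. -/
noncomputable def stdNormalPDF (x : ℝ) : ℝ :=
  (Real.sqrt (2 * Real.pi))⁻¹ * Real.exp (-x ^ 2 / 2)

/-- Standard normal CDF `Φ(x) = ∫_{-∞}^x φ(u) du`. -/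
noncomputable def stdNormalCDF (x : ℝ) : ℝ :=
  ∫ u in Set.Iic x, stdNormalPDF u

/-- CDF of the standard normal distribution truncated to `[a, b]`. -/
noncomputable def truncNormalCDF (a b : ℝ) (x : ℝ) : ℝ :=
  if x < a then 0
  else if x ≤ b then (stdNormalCDF x - stdNormalCDF a) / (stdNormalCDF b - stdNormalCDF a)
  else 1


lemma pdf_cont : Continuous stdNormalPDF := by
  unfold stdNormalPDF; fun_prop

lemma pdf_pos (x : ℝ) : 0 < stdNormalPDF x := by
  unfold stdNormalPDF
  positivity

lemma pdf_integrable : Integrable stdNormalPDF := by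
  have h : stdNormalPDF = fun x => (Real.sqrt (2 * Real.pi))⁻¹ * Real.exp (-(2⁻¹) * x ^ 2) := by
    funext x; unfold stdNormalPDF; ring_nf
  rw [h]
  exact (integrable_exp_neg_mul_sq (by norm_num)).const_mul _

lemma cdf_sub (a b : ℝ) : stdNormalCDF b - stdNormalCDF a = ∫ x in a..b, stdNormalPDF x :=
  intervalIntegral.integral_Iic_sub_Iic pdf_integrable.integrableOn pdf_integrable.integrableOn

lemma cdf_hasDeriv (x : ℝ) : HasDerivAt stdNormalCDF (stdNormalPDF x) x := by
  have h : stdNormalCDF = fun t => stdNormalCDF 0 + ∫ u in (0:ℝ)..t, stdNormalPDF u := by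
    funext t
    rw [← cdf_sub]; ring
  rw [h]
  exact ((intervalIntegral.integral_hasDerivAt_right (pdf_cont.intervalIntegrable _ _)
    pdf_cont.aestronglyMeasurable.stronglyMeasurableAtFilter pdf_cont.continuousAt).const_add _)

lemma cdf_cont : Continuous stdNormalCDF :=
  continuous_iff_continuousAt.2 fun x => (cdf_hasDeriv x).continuousAt

lemma pdf_hasDeriv (x : ℝ) : HasDerivAt stdNormalPDF (-x * stdNormalPDF x) x := by
  have h1 : HasDerivAt (fun z : ℝ => -z ^ 2 / 2) (-x) x := by
    have := ((hasDerivAt_pow 2 x).neg).div_const 2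
    refine this.congr_deriv ?_
    norm_num; ring
  have h2 := (h1.exp).const_mul (Real.sqrt (2 * Real.pi))⁻¹
  refine h2.congr_deriv ?_
  unfold stdNormalPDF; ring

lemma pdf_sq (x : ℝ) : stdNormalPDF x ^ 2 = (2 * Real.pi)⁻¹ * Real.exp (-x ^ 2) := by
  unfold stdNormalPDF
  have he : Real.exp (-x ^ 2 / 2) ^ 2 = Real.exp (-x ^ 2) := by
    rw [← Real.exp_nat_mul]; push_cast; ring_nf
  rw [mul_pow, he, inv_pow, Real.sq_sqrt (by positivity : (0:ℝ) ≤ 2 * Real.pi)]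

lemma pdf_sqrt2 (x : ℝ) : stdNormalPDF (Real.sqrt 2 * x)
    = (Real.sqrt (2 * Real.pi))⁻¹ * Real.exp (-x ^ 2) := by
  unfold stdNormalPDF
  rw [mul_pow, Real.sq_sqrt (by norm_num : (0:ℝ) ≤ 2)]
  ring_nf

lemma key (x : ℝ) : 2 * stdNormalPDF x ^ 2
    - (Real.sqrt Real.pi)⁻¹ * (Real.sqrt 2 * stdNormalPDF (Real.sqrt 2 * x)) = 0 := by
  rw [pdf_sq, pdf_sqrt2, Real.sqrt_mul (by norm_num : (0:ℝ) ≤ 2)]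
  have hπ : Real.sqrt Real.pi ^ 2 = Real.pi := Real.sq_sqrt Real.pi_pos.le
  have h2 : Real.sqrt 2 ^ 2 = 2 := Real.sq_sqrt (by norm_num)
  have hπ0 : Real.sqrt Real.pi ≠ 0 := by positivity
  have h20 : Real.sqrt 2 ≠ 0 := by positivity
  have hp : Real.pi ≠ 0 := Real.pi_ne_zero
  field_simp
  linear_combination (Real.exp (-x ^ 2)) * hπ

noncomputable def twAux_A (k z : ℝ) : ℝ :=
  z * (stdNormalCDF z - k) ^ 2 + 2 * stdNormalPDF z * (stdNormalCDF z - k)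
    - (Real.sqrt Real.pi)⁻¹ * stdNormalCDF (Real.sqrt 2 * z)

lemma hasDerivAt_twAux_A (k x : ℝ) :
    HasDerivAt (twAux_A k) ((stdNormalCDF x - k) ^ 2) x := by
  have h1 : HasDerivAt (fun z => z * (stdNormalCDF z - k) ^ 2)
      (1 * (stdNormalCDF x - k) ^ 2
        + x * (2 * (stdNormalCDF x - k) ^ 1 * stdNormalPDF x)) x :=
    (hasDerivAt_id x).mul (((cdf_hasDeriv x).sub_const k).pow 2)
  have h2 : HasDerivAt (fun z => 2 * stdNormalPDF z * (stdNormalCDF z - k))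
      ((2 * (-x * stdNormalPDF x)) * (stdNormalCDF x - k)
        + (2 * stdNormalPDF x) * stdNormalPDF x) x :=
    ((pdf_hasDeriv x).const_mul 2).mul ((cdf_hasDeriv x).sub_const k)
  have h3 : HasDerivAt (fun z => stdNormalCDF (Real.sqrt 2 * z))
      (stdNormalPDF (Real.sqrt 2 * x) * Real.sqrt 2) x := by
    have hm : HasDerivAt (fun z : ℝ => Real.sqrt 2 * z) (Real.sqrt 2) x := by
      simpa using (hasDerivAt_id x).const_mul (Real.sqrt 2)
    exact (cdf_hasDeriv (Real.sqrt 2 * x)).comp x hm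
  have h := (h1.add h2).sub (h3.const_mul (Real.sqrt Real.pi)⁻¹)
  refine h.congr_deriv ?_
  have hk := key x
  linear_combination (1 : ℝ) * hk

lemma integral_twAux_A (k u w : ℝ) :
    ∫ z in u..w, (stdNormalCDF z - k) ^ 2 = twAux_A k w - twAux_A k u :=
  intervalIntegral.integral_eq_sub_of_hasDerivAt (fun x _ => hasDerivAt_twAux_A k x)
    (((cdf_cont.sub continuous_const).pow 2).intervalIntegrable u w)

lemma twAux_alg (Pa Pt Pv Pb pt pv pb S2t S2v S2b sπ C τ v b : ℝ)
    (hC : C = Pb - Pa) (hC0 : C ≠ 0) (hπ0 : sπ ≠ 0) :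
    ((v * (Pv - Pa) ^ 2 + 2 * pv * (Pv - Pa) - sπ⁻¹ * S2v)
        - (τ * (Pt - Pa) ^ 2 + 2 * pt * (Pt - Pa) - sπ⁻¹ * S2t)) / C ^ 2
      + ((b * (Pb - Pb) ^ 2 + 2 * pb * (Pb - Pb) - sπ⁻¹ * S2b)
        - (v * (Pv - Pb) ^ 2 + 2 * pv * (Pv - Pb) - sπ⁻¹ * S2v)) / C ^ 2
    = -τ * ((Pt - Pa) / C) ^ 2 + v * (2 * (Pv - Pa) / C - 1)
      + 2 / C * (pv - pt * (Pt - Pa) / C) - sπ⁻¹ * (S2b - S2t) / C ^ 2 := by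
  subst hC
  field_simp
  ring

set_option maxHeartbeats 1000000 in
theorem twCRPS_truncNormal (a b : ℝ) (hab : a < b)
    (τ y : ℝ) (hτa : a ≤ τ) (hτb : τ ≤ b) (hya : a ≤ y) (hyb : y ≤ b) :
    twCRPS (truncNormalCDF a b) τ y =
      -τ * ((stdNormalCDF τ - stdNormalCDF a) / (stdNormalCDF b - stdNormalCDF a)) ^ 2
        + max y τ *
          (2 * (stdNormalCDF (max y τ) - stdNormalCDF a)
              / (stdNormalCDF b - stdNormalCDF a) - 1)
        + 2 / (stdNormalCDF b - stdNormalCDF a) *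
          (stdNormalPDF (max y τ)
            - stdNormalPDF τ *
              (stdNormalCDF τ - stdNormalCDF a) / (stdNormalCDF b - stdNormalCDF a))
        - (Real.sqrt Real.pi)⁻¹ *
          (stdNormalCDF (Real.sqrt 2 * b) - stdNormalCDF (Real.sqrt 2 * τ))
            / (stdNormalCDF b - stdNormalCDF a) ^ 2 := by
  have hC : 0 < stdNormalCDF b - stdNormalCDF a := by
    rw [cdf_sub]
    exact intervalIntegral.intervalIntegral_pos_of_pos (pdf_cont.intervalIntegrable a b) pdf_pos hab
  have hC0 : stdNormalCDF b - stdNormalCDF a ≠ 0 := ne_of_gt hC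
  set C := stdNormalCDF b - stdNormalCDF a with hCdef
  set v := max y τ with hv
  have hτv : τ ≤ v := le_max_right y τ
  have hvb : v ≤ b := max_le hyb hτb
  have hav : a ≤ v := hτa.trans hτv
  -- abbreviation for the integrand
  set f : ℝ → ℝ := fun z => (truncNormalCDF a b z - if y ≤ z then (1:ℝ) else 0) ^ 2 with hfdef
  set g1 : ℝ → ℝ := fun z => ((stdNormalCDF z - stdNormalCDF a) / C) ^ 2 with hg1def
  set g2 : ℝ → ℝ := fun z => ((stdNormalCDF z - stdNormalCDF b) / C) ^ 2 with hg2def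
  have hg1c : Continuous g1 := ((cdf_cont.sub continuous_const).div_const _).pow 2
  have hg2c : Continuous g2 := ((cdf_cont.sub continuous_const).div_const _).pow 2
  have hF : ∀ z, a ≤ z → z ≤ b →
      truncNormalCDF a b z = (stdNormalCDF z - stdNormalCDF a) / C := by
    intro z h1 h2
    rw [truncNormalCDF, if_neg (not_lt.2 h1), if_pos h2]
  -- a.e. equality on (τ, v]
  have hy0 : ∀ᵐ z : ℝ, z ≠ y := by
    rw [ae_iff]
    have h : {z : ℝ | ¬ z ≠ y} = {y} := by ext z; simp
    rw [h]
    exact measure_singleton y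
  have hfg1 : f =ᵐ[volume.restrict (Ioc τ v)] g1 := by
    filter_upwards [ae_restrict_mem measurableSet_Ioc, ae_restrict_of_ae hy0] with z hz hzy
    obtain ⟨hz1, hz2⟩ := hz
    have hzy' : z < y := by
      rcases le_or_gt y τ with h | h
      · exfalso
        have hvτ : v = τ := max_eq_right h
        rw [hvτ] at hz2
        exact absurd hz2 (not_le.2 hz1)
      · have hvy : v = y := max_eq_left h.le
        exact lt_of_le_of_ne (hvy ▸ hz2) hzy
    show (truncNormalCDF a b z - if y ≤ z then (1:ℝ) else 0) ^ 2 = _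
    rw [hF z (hτa.trans hz1.le) (hz2.trans hvb), if_neg (not_le.2 hzy')]
    simp [hg1def]
  -- exact equality on (v, b]
  have hfg2 : EqOn f g2 (Ioc v b) := by
    intro z hz
    obtain ⟨hz1, hz2⟩ := hz
    have hyz : y ≤ z := (le_max_left y τ).trans hz1.le
    show (truncNormalCDF a b z - if y ≤ z then (1:ℝ) else 0) ^ 2 = _
    rw [hF z (hav.trans hz1.le) hz2, if_pos hyz]
    show _ = ((stdNormalCDF z - stdNormalCDF b) / C) ^ 2
    rw [hCdef]
    rw [div_sub_one (show stdNormalCDF b - stdNormalCDF a ≠ 0 from hC0)]; congr 2; ring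
  -- vanishing on (b, ∞)
  have hzero : EqOn f 0 (Ioi b) := by
    intro z hz
    show (truncNormalCDF a b z - if y ≤ z then (1:ℝ) else 0) ^ 2 = 0
    rw [truncNormalCDF, if_neg (not_lt.2 (hab.le.trans (le_of_lt hz))),
      if_neg (not_le.2 hz), if_pos (hyb.trans (le_of_lt hz))]
    ring
  -- integrability
  have hint1 : IntegrableOn f (Ioc τ v) := (hg1c.integrableOn_Ioc).congr hfg1.symm
  have hint2 : IntegrableOn f (Ioc v b) :=
    (hg2c.integrableOn_Ioc).congr_fun (fun z hz => (hfg2 hz).symm) measurableSet_Ioc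
  have hint3 : IntegrableOn f (Ioi b) := by
    apply (integrableOn_zero (s := Ioi b)).congr_fun (fun z hz => (hzero hz).symm) measurableSet_Ioi
  have hintτb : IntegrableOn f (Ioc τ b) := by
    rw [← Ioc_union_Ioc_eq_Ioc hτv hvb]
    exact hint1.union hint2
  -- split the integral
  have hstep : twCRPS (truncNormalCDF a b) τ y
      = (∫ z in Ioc τ v, f z) + ∫ z in Ioc v b, f z := by
    show (∫ z in Ioi τ, f z) = _
    rw [← Ioc_union_Ioi_eq_Ioi hτb,
      setIntegral_union (Ioc_disjoint_Ioi le_rfl) measurableSet_Ioi hintτb hint3,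
      ← Ioc_union_Ioc_eq_Ioc hτv hvb,
      setIntegral_union ((Ioc_disjoint_Ioi le_rfl).mono_right Ioc_subset_Ioi_self)
        measurableSet_Ioc hint1 hint2]
    have h0 : ∫ z in Ioi b, f z = ∫ z in Ioi b, (0 : ℝ) :=
      setIntegral_congr_fun measurableSet_Ioi hzero
    rw [h0]
    simp
  have hI1 : ∫ z in Ioc τ v, f z
      = (twAux_A (stdNormalCDF a) v - twAux_A (stdNormalCDF a) τ) / C ^ 2 := by
    rw [integral_congr_ae hfg1, ← intervalIntegral.integral_of_le hτv]
    simp only [hg1def, div_pow]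
    rw [intervalIntegral.integral_div, integral_twAux_A]
  have hI2 : ∫ z in Ioc v b, f z
      = (twAux_A (stdNormalCDF b) b - twAux_A (stdNormalCDF b) v) / C ^ 2 := by
    rw [setIntegral_congr_fun measurableSet_Ioc hfg2, ← intervalIntegral.integral_of_le hvb]
    simp only [hg2def, div_pow]
    rw [intervalIntegral.integral_div, integral_twAux_A]
  rw [hstep, hI1, hI2]
  have hπ0 : (Real.sqrt Real.pi) ≠ 0 := by positivity
  simp only [twAux_A]
  exact twAux_alg _ _ _ _ _ _ _ _ _ _ _ _ _ _ _ hCdef hC0 hπ0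
end

section
/- Let F(x) = 1/(1 + e^{−x}) be the standard logistic cumulative distribution function, let −∞ < a < b < ∞, and let F_a^b denote the standard logistic distribution truncated to [a, b], i.e. F_a^b(x) = 0 for x < a, F_a^b(x) = (F(x) − F(a))/(F(b) − F(a)) for a ≤ x ≤ b, and F_a^b(x) = 1 for x > b. Then for every threshold τ with a ≤ τ ≤ b and every observation y with a ≤ y ≤ b, writing v = max(y, τ): twCRPS_τ(F_a^b, y) = (1/(F(b) − F(a))²) · ( F(τ) − F(b) + F(a)² log(F(v)/F(τ)) + (1 − F(a))² log((1 − F(τ))/(1 − F(v))) + F(b)² log(F(b)/F(v)) + (1 − F(b))² log((1 − F(v))/(1 − F(b))) ). -/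
open MeasureTheory Set

/-- Standard logistic CDF `F(x) = 1/(1 + e^{−x})`. -/
noncomputable def logisticCDF (x : ℝ) : ℝ := 1 / (1 + Real.exp (-x))

/-- CDF of the standard logistic distribution truncated to `[a, b]`. -/
noncomputable def truncLogisticCDF (a b : ℝ) (x : ℝ) : ℝ :=
  if x < a then 0
  else if x ≤ b then (logisticCDF x - logisticCDF a) / (logisticCDF b - logisticCDF a)
  else 1

lemma logisticCDF_pos (x : ℝ) : 0 < logisticCDF x := by
  unfold logisticCDF; positivity

lemma logisticCDF_lt_one (x : ℝ) : logisticCDF x < 1 := by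
  unfold logisticCDF
  rw [div_lt_one (by positivity)]
  linarith [Real.exp_pos (-x)]

lemma logisticCDF_strictMono : StrictMono logisticCDF := by
  intro x y hxy
  unfold logisticCDF
  have h1 : Real.exp (-y) < Real.exp (-x) := Real.exp_lt_exp.2 (by linarith)
  rw [div_lt_div_iff₀ (by positivity) (by positivity)]
  linarith

lemma continuous_logisticCDF : Continuous logisticCDF := by
  unfold logisticCDF
  exact continuous_const.div (continuous_const.add (Real.continuous_exp.comp continuous_neg))
    (fun x => by positivity)

lemma hasDerivAt_logisticCDF (x : ℝ) :
    HasDerivAt logisticCDF (logisticCDF x * (1 - logisticCDF x)) x := by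
  have h1 : HasDerivAt (fun x : ℝ => 1 + Real.exp (-x)) (-Real.exp (-x)) x := by
    have h := (Real.hasDerivAt_exp (-x)).comp x (hasDerivAt_neg x)
    simpa using h.const_add 1
  have hne : (1 : ℝ) + Real.exp (-x) ≠ 0 := by positivity
  have h2 := h1.inv hne
  have heq : logisticCDF = fun x : ℝ => (1 + Real.exp (-x))⁻¹ := by
    funext z; simp [logisticCDF, one_div]
  rw [heq]
  refine h2.congr_deriv ?_
  have hx := Real.exp_pos (-x)
  field_simp [logisticCDF]
  ring

noncomputable def Hfun (c z : ℝ) : ℝ :=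
  c ^ 2 * Real.log (logisticCDF z) - (1 - c) ^ 2 * Real.log (1 - logisticCDF z) - logisticCDF z

lemma hasDerivAt_Hfun (c x : ℝ) :
    HasDerivAt (Hfun c) ((logisticCDF x - c) ^ 2) x := by
  have hg := hasDerivAt_logisticCDF x
  have h0 : logisticCDF x ≠ 0 := ne_of_gt (logisticCDF_pos x)
  have h1 : 1 - logisticCDF x ≠ 0 := ne_of_gt (by linarith [logisticCDF_lt_one x])
  have hlog1 := hg.log h0
  have hlog2 := ((hasDerivAt_const x (1:ℝ)).sub hg).log h1
  have h := ((hlog1.const_mul (c^2)).sub (hlog2.const_mul ((1-c)^2))).sub hg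
  unfold Hfun
  refine h.congr_deriv ?_
  simp only [Pi.sub_apply]
  field_simp
  ring

lemma integral_logistic_sq (c s t : ℝ) :
    ∫ z in s..t, (logisticCDF z - c) ^ 2 = Hfun c t - Hfun c s :=
  intervalIntegral.integral_eq_sub_of_hasDerivAt (fun z _ => hasDerivAt_Hfun c z)
    (((continuous_logisticCDF.sub continuous_const).pow 2).intervalIntegrable s t)

theorem twCRPS_truncLogistic (a b : ℝ) (hab : a < b)
    (τ y : ℝ) (hτa : a ≤ τ) (hτb : τ ≤ b) (hya : a ≤ y) (hyb : y ≤ b) :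
    twCRPS (truncLogisticCDF a b) τ y =
      (1 / (logisticCDF b - logisticCDF a) ^ 2) *
        (logisticCDF τ - logisticCDF b
          + (logisticCDF a) ^ 2 * Real.log (logisticCDF (max y τ) / logisticCDF τ)
          + (1 - logisticCDF a) ^ 2 *
              Real.log ((1 - logisticCDF τ) / (1 - logisticCDF (max y τ)))
          + (logisticCDF b) ^ 2 * Real.log (logisticCDF b / logisticCDF (max y τ))
          + (1 - logisticCDF b) ^ 2 *
              Real.log ((1 - logisticCDF (max y τ)) / (1 - logisticCDF b))) := by
  set G := logisticCDF
  set A := G a with hA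
  set B := G b with hB
  set v := max y τ with hv
  have hAB : A < B := logisticCDF_strictMono hab
  have hD : B - A ≠ 0 := by linarith
  have hτv : τ ≤ v := le_max_right _ _
  have hvb : v ≤ b := max_le hyb hτb
  have hav : a ≤ v := le_trans hτa hτv
  set f : ℝ → ℝ := fun z => (truncLogisticCDF a b z - if y ≤ z then (1:ℝ) else 0) ^ 2 with hf
  set g1 : ℝ → ℝ := fun z => ((G z - A) / (B - A)) ^ 2 with hg1
  set g2 : ℝ → ℝ := fun z => ((G z - B) / (B - A)) ^ 2 with hg2
  have hg1c : Continuous g1 := ((continuous_logisticCDF.sub continuous_const).div_const _).pow 2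
  have hg2c : Continuous g2 := ((continuous_logisticCDF.sub continuous_const).div_const _).pow 2
  -- pointwise identifications
  have hI1 : ∀ᵐ z ∂(volume.restrict (Ioc τ v)), f z = g1 z := by
    have hy0 : ∀ᵐ z : ℝ ∂volume, z ∉ ({y} : Set ℝ) :=
      measure_eq_zero_iff_ae_notMem.mp (measure_singleton y)
    rw [ae_restrict_iff' measurableSet_Ioc]
    filter_upwards [hy0] with z hzy hz
    simp only [mem_singleton_iff] at hzy
    obtain ⟨hz1, hz2⟩ := hz
    have hza : ¬ z < a := not_lt.2 (le_trans hτa hz1.le)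
    have hzb : z ≤ b := le_trans hz2 hvb
    have hzy' : ¬ y ≤ z := by
      rcases le_max_iff.mp hz2 with h | h
      · exact not_le.2 (lt_of_le_of_ne h hzy)
      · exact absurd hz1 (not_lt.2 h)
    simp [hf, hg1, truncLogisticCDF, hza, hzb, hzy', G, A, B]
  have hI2 : ∀ z ∈ Ioc v b, f z = g2 z := by
    intro z hz
    have hza : ¬ z < a := not_lt.2 (le_trans hav hz.1.le)
    have hzy : y ≤ z := le_trans (le_max_left y τ) hz.1.le
    simp only [hf, hg2, truncLogisticCDF, hza, if_false, hz.2, if_true, if_pos hzy]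
    rw [div_sub_one hD]
    congr 1
    ring
  have hI3 : ∀ z ∈ Ioi b, f z = 0 := by
    intro z hz
    have hz' : b < z := hz
    have hza : ¬ z < a := not_lt.2 (le_trans hab.le hz'.le)
    have hzb : ¬ z ≤ b := not_le.2 hz'
    have hzy : y ≤ z := le_trans hyb hz'.le
    simp [hf, truncLogisticCDF, hza, hzb, hzy]
  -- integrability
  have hfi1 : IntegrableOn f (Ioc τ v) := (hg1c.integrableOn_Ioc).congr (hI1.mono fun z h => h.symm)
  have hfi2 : IntegrableOn f (Ioc v b) :=
    (hg2c.integrableOn_Ioc).congr ((ae_restrict_iff' measurableSet_Ioc).2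
      (ae_of_all _ (fun z hz => (hI2 z hz).symm)))
  have hfi3 : IntegrableOn f (Ioi b) :=
    (integrableOn_zero).congr ((ae_restrict_iff' measurableSet_Ioi).2
      (ae_of_all _ (fun z hz => (hI3 z hz).symm)))
  -- splitting
  have hsplit1 : Ioi τ = Ioc τ b ∪ Ioi b := (Ioc_union_Ioi_eq_Ioi hτb).symm
  have hsplit2 : Ioc τ b = Ioc τ v ∪ Ioc v b := (Ioc_union_Ioc_eq_Ioc hτv hvb).symm
  have htw : twCRPS (truncLogisticCDF a b) τ y
      = (∫ z in Ioc τ v, f z) + (∫ z in Ioc v b, f z) + (∫ z in Ioi b, f z) := by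
    rw [twCRPS]
    show (∫ z in Ioi τ, f z) = _
    rw [hsplit1, setIntegral_union (Ioc_disjoint_Ioi le_rfl) measurableSet_Ioi
      (hsplit2 ▸ hfi1.union hfi2) hfi3, hsplit2,
      setIntegral_union (Ioc_disjoint_Ioc_of_le le_rfl) measurableSet_Ioc hfi1 hfi2]
  have hz3 : (∫ z in Ioi b, f z) = 0 := by
    rw [setIntegral_congr_fun measurableSet_Ioi hI3]; simp
  have he1 : (∫ z in Ioc τ v, f z) = (Hfun A v - Hfun A τ) / (B - A) ^ 2 := by
    rw [setIntegral_congr_ae measurableSet_Ioc ((ae_restrict_iff' measurableSet_Ioc).1 hI1)]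
    rw [← intervalIntegral.integral_of_le hτv]
    simp only [hg1, div_pow]
    rw [intervalIntegral.integral_div, integral_logistic_sq]
  have he2 : (∫ z in Ioc v b, f z) = (Hfun B b - Hfun B v) / (B - A) ^ 2 := by
    rw [setIntegral_congr_fun measurableSet_Ioc hI2]
    rw [← intervalIntegral.integral_of_le hvb]
    simp only [hg2, div_pow]
    rw [intervalIntegral.integral_div, integral_logistic_sq]
  rw [htw, hz3, he1, he2]
  -- final algebra
  have hGτ : (0:ℝ) < G τ := logisticCDF_pos τ
  have hGv : (0:ℝ) < G v := logisticCDF_pos v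
  have hGb : (0:ℝ) < B := logisticCDF_pos b
  have hGτ1 : G τ < 1 := logisticCDF_lt_one τ
  have hGv1 : G v < 1 := logisticCDF_lt_one v
  have hGb1 : B < 1 := logisticCDF_lt_one b
  rw [Real.log_div (ne_of_gt hGv) (ne_of_gt hGτ),
    Real.log_div (by linarith : (1:ℝ) - G τ ≠ 0) (by linarith : (1:ℝ) - G v ≠ 0),
    Real.log_div (ne_of_gt hGb) (ne_of_gt hGv),
    Real.log_div (by linarith : (1:ℝ) - G v ≠ 0) (by linarith : (1:ℝ) - B ≠ 0)]
  unfold Hfun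
  field_simp
  ring
end

section
/- Define I(α, β) = ∫_{α}^{∞} φ(u) Φ(u + β) du for α, β ∈ ℝ, where φ and Φ are the standard normal density and CDF. Then for all α, β ∈ ℝ the identity I(α, β) = Φ(β/√2) − Φ(α) + I(β/√2, √2·α) holds. -/
open MeasureTheory Set

/-- The integral function `I(α, β) = ∫_α^∞ φ(u) Φ(u + β) du`. -/
noncomputable def intI (α β : ℝ) : ℝ :=
  ∫ u in Set.Ioi α, stdNormalPDF u * stdNormalCDF (u + β)

lemma pdf_eq_gauss : stdNormalPDF = ProbabilityTheory.gaussianPDFReal 0 1 := by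
  ext x; simp [stdNormalPDF, ProbabilityTheory.gaussianPDFReal]

lemma pdf_nonneg (x : ℝ) : 0 ≤ stdNormalPDF x := by
  rw [pdf_eq_gauss]; exact ProbabilityTheory.gaussianPDFReal_nonneg 0 1 x

lemma pdf_meas : Measurable stdNormalPDF := by
  rw [pdf_eq_gauss]; exact ProbabilityTheory.measurable_gaussianPDFReal 0 1

lemma pdf_le (x : ℝ) : stdNormalPDF x ≤ (Real.sqrt (2 * Real.pi))⁻¹ := by
  unfold stdNormalPDF
  have h1 : Real.exp (-x ^ 2 / 2) ≤ 1 := by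
    rw [Real.exp_le_one_iff]; nlinarith [sq_nonneg x]
  have h2 : (0:ℝ) ≤ (Real.sqrt (2 * Real.pi))⁻¹ := by positivity
  nlinarith

lemma pdf_integral_one : ∫ x, stdNormalPDF x = 1 := by
  rw [pdf_eq_gauss]; exact ProbabilityTheory.integral_gaussianPDFReal_eq_one 0 one_ne_zero

lemma cdf_mono : Monotone stdNormalCDF := fun x y hxy => by
  unfold stdNormalCDF
  exact setIntegral_mono_set pdf_integrable.integrableOn
    (Filter.Eventually.of_forall pdf_nonneg) (HasSubset.Subset.eventuallyLE (Iic_subset_Iic.mpr hxy))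

lemma cdf_meas : Measurable stdNormalCDF := cdf_mono.measurable

lemma cdf_nonneg (x : ℝ) : 0 ≤ stdNormalCDF x :=
  setIntegral_nonneg measurableSet_Iic (fun u _ => pdf_nonneg u)

lemma cdf_le_one (x : ℝ) : stdNormalCDF x ≤ 1 := by
  rw [← pdf_integral_one]
  exact setIntegral_le_integral pdf_integrable (Filter.Eventually.of_forall pdf_nonneg)

lemma cdf_abs_le_one (x : ℝ) : ‖stdNormalCDF x‖ ≤ 1 := by
  rw [Real.norm_eq_abs, abs_of_nonneg (cdf_nonneg x)]; exact cdf_le_one x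

lemma tail_eq (x : ℝ) : ∫ u in Set.Ioi x, stdNormalPDF u = 1 - stdNormalCDF x := by
  have := intervalIntegral.integral_Iic_add_Ioi (b := x) (f := stdNormalPDF) (μ := volume)
    pdf_integrable.integrableOn pdf_integrable.integrableOn
  rw [pdf_integral_one] at this
  unfold stdNormalCDF; linarith

lemma intI_integrand_integrable (β : ℝ) :
    Integrable (fun u => stdNormalPDF u * stdNormalCDF (u + β)) := by
  have : Integrable (fun u => stdNormalCDF (u + β) * stdNormalPDF u) :=
    pdf_integrable.bdd_mul ((cdf_meas.comp (measurable_add_const β)).aestronglyMeasurable)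
      (Filter.Eventually.of_forall fun u => cdf_abs_le_one _)
  simpa [mul_comm] using this

lemma setIntegral_affine (f : ℝ → ℝ) (hf : Measurable f) (a b : ℝ) (ha : 0 < a)
    (s : Set ℝ) (hs : MeasurableSet s) :
    ∫ x in (fun t => a * t + b) ⁻¹' s, f (a * x + b) = a⁻¹ * ∫ y in s, f y := by
  have hmap : Measure.map (fun t : ℝ => a * t + b) volume
      = ENNReal.ofReal a⁻¹ • volume := by
    have h1 : (fun t : ℝ => a * t + b) = (fun t : ℝ => t + b) ∘ (fun t : ℝ => a * t) := rfl
    rw [h1, ← Measure.map_map (measurable_add_const b) (measurable_const_mul a),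
      Real.map_volume_mul_left ha.ne', Measure.map_smul,
      (measurePreserving_add_right volume b).map_eq, abs_of_pos (inv_pos.mpr ha)]
  have key : ∫ y in s, f y ∂(Measure.map (fun t : ℝ => a * t + b) volume)
      = ∫ x in (fun t => a * t + b) ⁻¹' s, f (a * x + b) :=
    MeasureTheory.setIntegral_map hs hf.aestronglyMeasurable (Measurable.aemeasurable (by fun_prop))
  rw [hmap] at key
  rw [← key, Measure.restrict_smul, integral_smul_measure, ENNReal.toReal_ofReal (by positivity),
    smul_eq_mul]

local notation "r2" => Real.sqrt 2

lemma r2_pos : (0:ℝ) < r2 := by positivity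
lemma r2_sq : r2 ^ 2 = 2 := Real.sq_sqrt (by norm_num)

-- pointwise rotation identity
lemma pdf_rot (u t : ℝ) :
    stdNormalPDF u * stdNormalPDF (r2 * t + u) = stdNormalPDF t * stdNormalPDF (r2 * u + t) := by
  have hs := r2_sq
  unfold stdNormalPDF
  rw [mul_mul_mul_comm, ← Real.exp_add, mul_mul_mul_comm, ← Real.exp_add]
  congr 1
  rw [Real.exp_eq_exp]
  linear_combination (u^2 - t^2) / 2 * hs

lemma pdf_comp_affine_integrable (a b : ℝ) (ha : a ≠ 0) :
    Integrable (fun t => stdNormalPDF (a * t + b)) := by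
  have h1 : Integrable (fun x : ℝ => stdNormalPDF (x + b)) := by
    rw [show (fun x : ℝ => stdNormalPDF (x + b)) = stdNormalPDF ∘ (fun x : ℝ => x + b) from rfl,
      (measurePreserving_add_right volume b).integrable_comp pdf_integrable.aestronglyMeasurable]
    exact pdf_integrable
  exact (integrable_comp_mul_left_iff (fun x : ℝ => stdNormalPDF (x + b)) ha).mpr h1

lemma integral_pdf_affine (a : ℝ) : ∫ t : ℝ, stdNormalPDF (r2 * t + a) = (r2)⁻¹ := by
  have := setIntegral_affine stdNormalPDF pdf_meas r2 a r2_pos univ MeasurableSet.univ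
  simp only [preimage_univ, Measure.restrict_univ] at this
  rw [this, pdf_integral_one, mul_one]

lemma cdf_sub_s19 (u β : ℝ) :
    stdNormalCDF (u + β) = ∫ t in Iic (β / r2), r2 * stdNormalPDF (r2 * t + u) := by
  have hpre : (fun t : ℝ => r2 * t + u) ⁻¹' Iic (u + β) = Iic (β / r2) := by
    ext t
    simp only [mem_preimage, mem_Iic]
    rw [le_div_iff₀ r2_pos]
    constructor <;> intro h <;> nlinarith [r2_pos]
  have := setIntegral_affine stdNormalPDF pdf_meas r2 u r2_pos (Iic (u + β)) measurableSet_Iic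
  rw [hpre] at this
  rw [MeasureTheory.integral_const_mul, this, stdNormalCDF]
  rw [← mul_assoc, mul_inv_cancel₀ r2_pos.ne', one_mul]

lemma tail_sub (α t : ℝ) :
    ∫ u in Ioi α, r2 * stdNormalPDF (r2 * u + t) = 1 - stdNormalCDF (r2 * α + t) := by
  have hpre : (fun u : ℝ => r2 * u + t) ⁻¹' Ioi (r2 * α + t) = Ioi α := by
    ext u
    simp only [mem_preimage, mem_Ioi]
    constructor <;> intro h <;> nlinarith [r2_pos]
  have := setIntegral_affine stdNormalPDF pdf_meas r2 t r2_pos (Ioi (r2 * α + t)) measurableSet_Ioi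
  rw [hpre, tail_eq] at this
  rw [MeasureTheory.integral_const_mul, this, ← mul_assoc, mul_inv_cancel₀ r2_pos.ne', one_mul]

lemma univ_sub (t : ℝ) : ∫ u : ℝ, r2 * stdNormalPDF (r2 * u + t) = 1 := by
  rw [MeasureTheory.integral_const_mul, integral_pdf_affine]
  field_simp

lemma pdf_rot' (u t : ℝ) :
    stdNormalPDF u * (r2 * stdNormalPDF (r2 * t + u))
      = stdNormalPDF t * (r2 * stdNormalPDF (r2 * u + t)) := by
  linear_combination r2 * pdf_rot u t

lemma swap_lemma (β : ℝ) (s : Set ℝ) (hs : MeasurableSet s) :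
    ∫ u in s, stdNormalPDF u * stdNormalCDF (u + β)
      = ∫ t in Iic (β / r2), stdNormalPDF t * ∫ u in s, r2 * stdNormalPDF (r2 * u + t) := by
  set c := β / r2 with hc
  have hmeas : AEStronglyMeasurable
      (fun p : ℝ × ℝ => stdNormalPDF p.1 * (r2 * stdNormalPDF (r2 * p.2 + p.1)))
      (volume.prod volume) := by
    apply Continuous.aestronglyMeasurable
    exact (pdf_cont.comp continuous_fst).mul
      (continuous_const.mul (pdf_cont.comp (by fun_prop)))
  have hFull : Integrable
      (fun p : ℝ × ℝ => stdNormalPDF p.1 * (r2 * stdNormalPDF (r2 * p.2 + p.1)))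
      (volume.prod volume) := by
    rw [integrable_prod_iff hmeas]
    constructor
    · refine Filter.Eventually.of_forall fun u => ?_
      simpa using ((pdf_comp_affine_integrable r2 u r2_pos.ne').const_mul r2).const_mul (stdNormalPDF u)
    · have heq : (fun u => ∫ t : ℝ, ‖stdNormalPDF u * (r2 * stdNormalPDF (r2 * t + u))‖)
          = stdNormalPDF := by
        funext u
        have : ∀ t : ℝ, ‖stdNormalPDF u * (r2 * stdNormalPDF (r2 * t + u))‖
            = stdNormalPDF u * (r2 * stdNormalPDF (r2 * t + u)) := by
          intro t
          rw [Real.norm_eq_abs, abs_of_nonneg]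
          have := pdf_nonneg u; have := pdf_nonneg (r2 * t + u); have := r2_pos
          positivity
        simp_rw [this, MeasureTheory.integral_const_mul, integral_pdf_affine,
          mul_inv_cancel₀ r2_pos.ne', mul_one]
      rw [heq]
      exact pdf_integrable
  have hRes : Integrable
      (fun p : ℝ × ℝ => stdNormalPDF p.1 * (r2 * stdNormalPDF (r2 * p.2 + p.1)))
      ((volume.restrict s).prod (volume.restrict (Iic c))) := by
    rw [Measure.prod_restrict]
    exact hFull.restrict
  calc ∫ u in s, stdNormalPDF u * stdNormalCDF (u + β)
      = ∫ u in s, ∫ t in Iic c, stdNormalPDF u * (r2 * stdNormalPDF (r2 * t + u)) := by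
        refine setIntegral_congr_fun hs fun u _ => ?_
        rw [cdf_sub_s19 u β, ← hc, ← MeasureTheory.integral_const_mul]
    _ = ∫ t in Iic c, ∫ u in s, stdNormalPDF u * (r2 * stdNormalPDF (r2 * t + u)) :=
        MeasureTheory.integral_integral_swap hRes
    _ = ∫ t in Iic c, ∫ u in s, stdNormalPDF t * (r2 * stdNormalPDF (r2 * u + t)) := by
        simp_rw [pdf_rot']
    _ = ∫ t in Iic c, stdNormalPDF t * ∫ u in s, r2 * stdNormalPDF (r2 * u + t) := by
        simp_rw [MeasureTheory.integral_const_mul]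

lemma G_lemma (a : ℝ) : ∫ u : ℝ, stdNormalPDF u * stdNormalCDF (u + a) = stdNormalCDF (a / r2) := by
  have h := swap_lemma a univ MeasurableSet.univ
  simp only [Measure.restrict_univ] at h
  rw [h]
  simp_rw [univ_sub, mul_one]
  rfl

theorem intI_identity (α β : ℝ) :
    intI α β =
      stdNormalCDF (β / Real.sqrt 2) - stdNormalCDF α
        + intI (β / Real.sqrt 2) (Real.sqrt 2 * α) := by
  have hint2 : Integrable (fun t => stdNormalPDF t * stdNormalCDF (t + r2 * α)) :=
    intI_integrand_integrable (r2 * α)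
  have step1 : intI α β
      = ∫ t in Iic (β / r2), (stdNormalPDF t - stdNormalPDF t * stdNormalCDF (t + r2 * α)) := by
    rw [intI, swap_lemma β (Ioi α) measurableSet_Ioi]
    refine setIntegral_congr_fun measurableSet_Iic fun t _ => ?_
    rw [tail_sub, add_comm (r2 * α) t, mul_sub, mul_one]
  rw [step1, integral_sub pdf_integrable.integrableOn hint2.integrableOn]
  have h1 : ∫ t in Iic (β / r2), stdNormalPDF t = stdNormalCDF (β / r2) := rfl
  have h3 := intervalIntegral.integral_Iic_add_Ioi (b := β / r2) (μ := volume)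
    hint2.integrableOn hint2.integrableOn
  have h4 : ∫ t : ℝ, stdNormalPDF t * stdNormalCDF (t + r2 * α) = stdNormalCDF α := by
    rw [G_lemma]
    congr 1
    exact mul_div_cancel_left₀ α r2_pos.ne'
  have h5 : ∫ t in Ioi (β / r2), stdNormalPDF t * stdNormalCDF (t + r2 * α)
      = intI (β / r2) (r2 * α) := rfl
  rw [h1]
  rw [h4] at h3
  linarith [h3, h5.symm ▸ (rfl : intI (β / r2) (r2 * α) = intI (β / r2) (r2 * α))]
end
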